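/- For n ∈ ℕ and indices i < j (with i, j in the appropriate ranges), consider the cosimplicial identity δʲ ∘ δⁱ = δⁱ ∘ δʲ⁻¹ as a commutative square of maps of types Fin(n+1) → Fin(n+2) → Fin(n+3), where for 0 ≤ k ≤ m+1 the coface map δᵏ : Fin(m+1) → Fin(m+2) is the unique strictly order-preserving injection whose image omits k. This commutative square is both a pullback square and a pushout square in the category of types. -/

import Mathlib

open CategoryTheory Limits

section Aux

variable {n : ℕ} {i j : Fin (n + 2)}

/-- Pointwise cosimplicial identity. -/
lemma aux_comm (h : i ≤ j) (a : Fin (n + 1)) :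
    j.succ.succAbove (i.succAbove a) = i.castSucc.succAbove (j.succAbove a) := by
  have := congr_arg (fun f => (SimplexCategory.Hom.toOrderHom f : Fin (n + 1) → Fin (n + 3)))
    (SimplexCategory.δ_comp_δ h)
  have := congr_fun this a
  simpa [SimplexCategory.δ, SimplexCategory.Hom.toOrderHom_mk] using this

lemma aux_i_lt (h : i ≤ j) : i.castSucc < j.succ := lt_of_le_of_lt (by simpa using h) (Fin.castSucc_lt_succ (i := j))

lemma aux_val (h : i ≤ j) : j.succ.succAbove i = i.castSucc :=
  Fin.succAbove_of_castSucc_lt _ _ (aux_i_lt h)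

lemma aux_val' (h : i ≤ j) : i.castSucc.succAbove j = j.succ :=
  Fin.succAbove_castSucc_of_le _ _ h

/-- Key surjectivity lemma: anything avoiding both `j.succ` and `i.castSucc` is in the image
of the composite. -/
lemma aux_key (h : i ≤ j) {d : Fin (n + 3)} (h1 : d ≠ j.succ) (h2 : d ≠ i.castSucc) :
    ∃ a : Fin (n + 1), j.succ.succAbove (i.succAbove a) = d := by
  obtain ⟨b, hb⟩ := Fin.exists_succAbove_eq h1
  have hbi : b ≠ i := by
    rintro rfl
    exact h2 (hb ▸ aux_val h)
  obtain ⟨a, ha⟩ := Fin.exists_succAbove_eq hbi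
  exact ⟨a, ha ▸ hb⟩

noncomputable def auxLift (h : i ≤ j) {W : Type} (fst snd : W → Fin (n + 2))
    (hc : ∀ x, j.succ.succAbove (fst x) = i.castSucc.succAbove (snd x)) (x : W) :
    Fin (n + 1) :=
  (aux_key h (Fin.succAbove_ne _ (fst x)) ((hc x) ▸ Fin.succAbove_ne _ (snd x))).choose

lemma auxLift_fst (h : i ≤ j) {W : Type} (fst snd : W → Fin (n + 2))
    (hc : ∀ x, j.succ.succAbove (fst x) = i.castSucc.succAbove (snd x)) (x : W) :
    i.succAbove (auxLift h fst snd hc x) = fst x :=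
  Fin.succAbove_right_injective (p := j.succ)
    (aux_key h (Fin.succAbove_ne _ (fst x)) ((hc x) ▸ Fin.succAbove_ne _ (snd x))).choose_spec

lemma auxLift_snd (h : i ≤ j) {W : Type} (fst snd : W → Fin (n + 2))
    (hc : ∀ x, j.succ.succAbove (fst x) = i.castSucc.succAbove (snd x)) (x : W) :
    j.succAbove (auxLift h fst snd hc x) = snd x := by
  apply Fin.succAbove_right_injective (p := i.castSucc)
  rw [← aux_comm h]
  exact ((aux_key h (Fin.succAbove_ne _ (fst x))
    ((hc x) ▸ Fin.succAbove_ne _ (snd x))).choose_spec).trans (hc x)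

end Aux

open CategoryTheory in
/-- The cosimplicial identity square `δ_{j+1} ∘ δ_i = δ_i ∘ δ_j` (for
`i ≤ j`, i.e. `i < j+1`), formed by the coface maps `δ_k = Fin.succAbove k`, is both a
pullback and a pushout square in the category of types. -/
theorem delta_delta_square_isPullback_and_isPushout
    (n : ℕ) (i j : Fin (n + 2)) (h : i ≤ j) :
    IsPullback (C := Type)
      (TypeCat.ofHom (Fin.succAbove i : Fin (n + 1) → Fin (n + 2)))
      (TypeCat.ofHom (Fin.succAbove j : Fin (n + 1) → Fin (n + 2)))
      (TypeCat.ofHom (Fin.succAbove j.succ : Fin (n + 2) → Fin (n + 3)))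
      (TypeCat.ofHom (Fin.succAbove i.castSucc : Fin (n + 2) → Fin (n + 3))) ∧
    IsPushout (C := Type)
      (TypeCat.ofHom (Fin.succAbove i : Fin (n + 1) → Fin (n + 2)))
      (TypeCat.ofHom (Fin.succAbove j : Fin (n + 1) → Fin (n + 2)))
      (TypeCat.ofHom (Fin.succAbove j.succ : Fin (n + 2) → Fin (n + 3)))
      (TypeCat.ofHom (Fin.succAbove i.castSucc : Fin (n + 2) → Fin (n + 3))) := by
  constructor
  · refine IsPullback.of_isLimit' ⟨ConcreteCategory.ext_apply fun a => aux_comm h a⟩ ?_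
    refine PullbackCone.IsLimit.mk _
      (fun s => TypeCat.ofHom (auxLift h s.fst s.snd (fun x => types_congr_hom s.condition x)))
      (fun s => ?_) (fun s => ?_) (fun s m h1 h2 => ?_)
    · refine ConcreteCategory.ext_apply (fun x => ?_)
      exact auxLift_fst h s.fst s.snd (fun x => types_congr_hom s.condition x) x
    · refine ConcreteCategory.ext_apply (fun x => ?_)
      exact auxLift_snd h s.fst s.snd (fun x => types_congr_hom s.condition x) x
    · refine ConcreteCategory.ext_apply (fun x => ?_)
      apply Fin.succAbove_right_injective (p := i)
      show i.succAbove (m x) = i.succAbove (auxLift h s.fst s.snd (fun x => types_congr_hom s.condition x) x)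
      rw [auxLift_fst h s.fst s.snd (fun x => types_congr_hom s.condition x) x]
      exact types_congr_hom h1 x
  · refine IsPushout.of_isColimit' ⟨ConcreteCategory.ext_apply fun a => aux_comm h a⟩ ?_
    refine PushoutCocone.IsColimit.mk _ (fun s => TypeCat.ofHom fun d =>
        if hd : d = j.succ then s.inr j
        else s.inl (Fin.exists_succAbove_eq hd).choose)
      (fun s => ?_) (fun s => ?_) (fun s m h1 h2 => ?_)
    · -- desc ∘ inl
      refine ConcreteCategory.ext_apply (fun b => ?_)
      have hne : j.succ.succAbove b ≠ j.succ := Fin.succAbove_ne _ _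
      show (if hd : j.succ.succAbove b = j.succ then s.inr j
        else s.inl (Fin.exists_succAbove_eq hd).choose) = s.inl b
      rw [dif_neg hne]
      exact congrArg s.inl
        (Fin.succAbove_right_injective (Fin.exists_succAbove_eq hne).choose_spec)
    · -- desc ∘ inr
      refine ConcreteCategory.ext_apply (fun c => ?_)
      show (if hd : i.castSucc.succAbove c = j.succ then s.inr j
        else s.inl (Fin.exists_succAbove_eq hd).choose) = s.inr c
      by_cases hd : i.castSucc.succAbove c = j.succ
      · rw [dif_pos hd]
        have hc : c = j := Fin.succAbove_right_injective (p := i.castSucc)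
          (by rw [hd, aux_val' h])
        rw [hc]
      · rw [dif_neg hd]
        obtain ⟨a, ha⟩ := aux_key h hd (Fin.succAbove_ne _ _)
        have hchoose : (Fin.exists_succAbove_eq hd).choose = i.succAbove a :=
          Fin.succAbove_right_injective
            ((Fin.exists_succAbove_eq hd).choose_spec.trans ha.symm)
        have hc : c = j.succAbove a := Fin.succAbove_right_injective (p := i.castSucc)
          (by rw [← ha, aux_comm h])
        rw [hchoose, hc]
        exact (types_congr_hom s.condition a)
    · -- uniqueness
      refine ConcreteCategory.ext_apply (fun d => ?_)
      show m d = (if hd : d = j.succ then s.inr j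
        else s.inl (Fin.exists_succAbove_eq hd).choose)
      by_cases hd : d = j.succ
      · subst hd
        rw [dif_pos rfl]
        have hv : i.castSucc.succAbove j = j.succ := aux_val' h
        calc m j.succ = m (i.castSucc.succAbove j) := by rw [hv]
          _ = s.inr j := types_congr_hom h2 j
      · rw [dif_neg hd]
        have hspec := (Fin.exists_succAbove_eq hd).choose_spec
        calc m d = m (j.succ.succAbove (Fin.exists_succAbove_eq hd).choose) := by rw [hspec]
          _ = s.inl (Fin.exists_succAbove_eq hd).choose := types_congr_hom h1 _
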